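/- arXiv:1110.6540 — 2 statements merged into one kernel-verified Lean document; each statement's English description precedes it below -/
import Mathlib

section
/- Let η(x,a,c) = c·sech(c(x−a)) with c > 0 and let ∂ₓ⁻¹f(x) = (1/2)(∫_{−∞}^x f − ∫_x^∞ f). Then ∂ₓ⁻¹(∂_cη)(x) = c⁻¹(x−a)·η(x,a,c) for all x ∈ ℝ, where ∂_cη is the partial derivative of η in c. -/
open Real MeasureTheory Filter Set Topology

/-- The common derivative expression. -/
noncomputable def etaG (a c y : ℝ) : ℝ :=
  (Real.cosh (c * (y - a)) - c * (y - a) * Real.sinh (c * (y - a))) /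
    (Real.cosh (c * (y - a))) ^ 2

lemma hasDerivAt_F (a c y : ℝ) :
    HasDerivAt (fun z : ℝ => (z - a) / Real.cosh (c * (z - a))) (etaG a c y) y := by
  have h1 : HasDerivAt (fun z : ℝ => z - a) 1 y := (hasDerivAt_id y).sub_const a
  have hin : HasDerivAt (fun z : ℝ => c * (z - a)) c y := by
    simpa using h1.const_mul c
  have h2 : HasDerivAt (fun z : ℝ => Real.cosh (c * (z - a)))
      (Real.sinh (c * (y - a)) * c) y := (Real.hasDerivAt_cosh _).comp y hin
  have h := h1.div h2 (Real.cosh_pos _).ne'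
  convert h using 1 <;> try rfl
  unfold etaG
  ring

lemma hasDerivAt_in_c (a c y : ℝ) :
    HasDerivAt (fun c' : ℝ => c' * (1 / Real.cosh (c' * (y - a)))) (etaG a c y) c := by
  have h1 : HasDerivAt (fun c' : ℝ => c') 1 c := hasDerivAt_id c
  have hin : HasDerivAt (fun c' : ℝ => c' * (y - a)) (y - a) c :=
    hasDerivAt_mul_const (y - a)
  have h2 : HasDerivAt (fun c' : ℝ => Real.cosh (c' * (y - a)))
      (Real.sinh (c * (y - a)) * (y - a)) c := (Real.hasDerivAt_cosh _).comp c hin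
  have h := h1.div h2 (Real.cosh_pos _).ne'
  have heq : (fun c' : ℝ => c' * (1 / Real.cosh (c' * (y - a))))
      = fun c' : ℝ => c' / Real.cosh (c' * (y - a)) := by
    funext c'; rw [mul_one_div]
  rw [heq]
  convert h using 1 <;> try rfl
  unfold etaG
  ring

lemma exp_half_le_cosh (t : ℝ) : Real.exp |t| / 2 ≤ Real.cosh t := by
  rw [Real.cosh_eq]
  rcases abs_cases t with ⟨h, _⟩ | ⟨h, _⟩
  · rw [h]
    have := Real.exp_pos (-t)
    linarith
  · rw [h]
    have := Real.exp_pos t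
    linarith

lemma frac_bound (a : ℝ) {c : ℝ} (hc : 0 < c) (y : ℝ) :
    (1 + |c * (y - a)|) / Real.cosh (c * (y - a))
      ≤ 4 * Real.exp (-(c / 2) * |y - a|) := by
  set t := c * (y - a) with ht
  have h3 : 1 + |t| ≤ 2 * Real.exp (|t| / 2) := by
    have := Real.add_one_le_exp (|t| / 2)
    nlinarith [Real.exp_pos (|t| / 2)]
  have h2 : (1 + |t|) / Real.cosh t ≤ (2 * Real.exp (|t| / 2)) / (Real.exp |t| / 2) :=
    div_le_div₀ (by positivity) h3 (by positivity) (exp_half_le_cosh t)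
  have h4 : (2 * Real.exp (|t| / 2)) / (Real.exp |t| / 2) = 4 * Real.exp (-(|t| / 2)) := by
    rw [show |t| = |t| / 2 + |t| / 2 by ring, Real.exp_add, Real.exp_neg]
    field_simp
    ring
  have habs : |t| = c * |y - a| := by
    rw [ht, abs_mul, abs_of_pos hc]
  calc (1 + |t|) / Real.cosh t ≤ (2 * Real.exp (|t| / 2)) / (Real.exp |t| / 2) := h2
    _ = 4 * Real.exp (-(|t| / 2)) := h4
    _ = 4 * Real.exp (-(c / 2) * |y - a|) := by rw [habs]; ring_nf

lemma etaG_bound (a : ℝ) {c : ℝ} (hc : 0 < c) (y : ℝ) :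
    |etaG a c y| ≤ 4 * Real.exp (-(c / 2) * |y - a|) := by
  set t := c * (y - a) with ht
  have hcosh := Real.cosh_pos t
  have hsinh : |Real.sinh t| ≤ Real.cosh t := by
    rw [Real.abs_sinh, ← Real.cosh_abs]
    rw [Real.sinh_eq, Real.cosh_eq]
    have := Real.exp_pos (-|t|)
    linarith
  have hnum : |Real.cosh t - t * Real.sinh t| ≤ (1 + |t|) * Real.cosh t := by
    calc |Real.cosh t - t * Real.sinh t| ≤ |Real.cosh t| + |t * Real.sinh t| :=
          abs_sub _ _
      _ = Real.cosh t + |t| * |Real.sinh t| := by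
          rw [abs_of_pos hcosh, abs_mul]
      _ ≤ Real.cosh t + |t| * Real.cosh t := by
          have := mul_le_mul_of_nonneg_left hsinh (abs_nonneg t)
          linarith
      _ = (1 + |t|) * Real.cosh t := by ring
  have h1 : |etaG a c y| ≤ (1 + |t|) / Real.cosh t := by
    unfold etaG
    rw [← ht, abs_div, abs_of_pos (pow_pos hcosh 2)]
    rw [div_le_div_iff₀ (pow_pos hcosh 2) hcosh]
    calc |Real.cosh t - t * Real.sinh t| * Real.cosh t
        ≤ ((1 + |t|) * Real.cosh t) * Real.cosh t :=
          mul_le_mul_of_nonneg_right hnum hcosh.le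
      _ = (1 + |t|) * Real.cosh t ^ 2 := by ring
  exact h1.trans (frac_bound a hc y)

lemma integrable_exp_half (a : ℝ) {c : ℝ} (hc : 0 < c) :
    Integrable (fun y : ℝ => 4 * Real.exp (-(c / 2) * |y - a|)) := by
  have hb : 0 < c / 2 := by linarith
  have h0 : Integrable (fun y : ℝ => Real.exp (-(c / 2) * |y|)) := by
    apply LocallyIntegrable.integrable_of_isBigO_atTop_of_norm_isNegInvariant
      (g := fun y : ℝ => Real.exp (-(c / 2) * y))
    · exact (Real.continuous_exp.comp (by fun_prop)).locallyIntegrable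
    · exact Eventually.of_forall fun y => by simp [Function.comp]
    · apply EventuallyEq.isBigO
      filter_upwards [eventually_ge_atTop (0 : ℝ)] with y hy
      rw [abs_of_nonneg hy]
    · exact ⟨Ioi 0, Ioi_mem_atTop 0, exp_neg_integrableOn_Ioi 0 hb⟩
  exact (h0.comp_sub_right a).const_mul 4

lemma integrable_etaG (a : ℝ) {c : ℝ} (hc : 0 < c) : Integrable (etaG a c) := by
  refine (integrable_exp_half a hc).mono' ?_ ?_
  · apply Continuous.aestronglyMeasurable
    apply Continuous.div (by fun_prop) (by fun_prop)
    exact fun y => pow_ne_zero _ (Real.cosh_pos _).ne'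
  · exact Eventually.of_forall fun y => by
      simpa [Real.norm_eq_abs] using etaG_bound a hc y

lemma tendsto_F (a : ℝ) {c : ℝ} (hc : 0 < c) {l : Filter ℝ}
    (habs : Tendsto (fun z : ℝ => |z - a|) l atTop) :
    Tendsto (fun z : ℝ => (z - a) / Real.cosh (c * (z - a))) l (𝓝 0) := by
  apply squeeze_zero_norm
    (a := fun z : ℝ => c⁻¹ * (4 * Real.exp (-(c / 2) * |z - a|)))
  · intro z
    set t := c * (z - a) with ht
    have hcosh := Real.cosh_pos t
    have h0 : |z - a| ≤ c⁻¹ * (1 + |t|) := by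
      rw [ht, abs_mul, abs_of_pos hc, mul_add, mul_one, ← mul_assoc,
        inv_mul_cancel₀ hc.ne', one_mul]
      have : 0 < c⁻¹ := inv_pos.mpr hc
      linarith
    have h1 : ‖(z - a) / Real.cosh t‖ ≤ (c⁻¹ * (1 + |t|)) / Real.cosh t := by
      rw [Real.norm_eq_abs, abs_div, abs_of_pos hcosh]
      exact div_le_div_of_nonneg_right h0 hcosh.le |>.trans_eq rfl
    refine h1.trans ?_
    rw [mul_div_assoc]
    exact mul_le_mul_of_nonneg_left (frac_bound a hc z) (inv_pos.mpr hc).le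
  · have h5 : Tendsto (fun z : ℝ => (c / 2) * |z - a|) l atTop :=
      habs.const_mul_atTop (by linarith)
    have h6 : Tendsto (fun z : ℝ => Real.exp (-((c / 2) * |z - a|))) l (𝓝 0) :=
      Real.tendsto_exp_neg_atTop_nhds_zero.comp h5
    have h7 : Tendsto (fun z : ℝ => c⁻¹ * (4 * Real.exp (-((c / 2) * |z - a|)))) l (𝓝 0) := by
      simpa using (h6.const_mul 4).const_mul c⁻¹
    simpa [neg_mul] using h7

/-- The antiderivative `∂ₓ⁻¹ f (x) = (1/2)(∫_{-∞}^x f - ∫_x^∞ f)`. -/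
noncomputable def invDx (f : ℝ → ℝ) (x : ℝ) : ℝ :=
  (1 / 2) * ((∫ y in Set.Iic x, f y) - ∫ y in Set.Ici x, f y)

theorem invDx_partial_c_eta (a c : ℝ) (hc : 0 < c)
    (η : ℝ → ℝ → ℝ → ℝ)
    (hη : ∀ x a c, η x a c = c * (1 / Real.cosh (c * (x - a)))) :
    ∀ x : ℝ,
      invDx (fun y : ℝ => deriv (fun c' : ℝ => η y a c') c) x
        = c⁻¹ * (x - a) * η x a c := by
  intro x
  have hfun : (fun y : ℝ => deriv (fun c' : ℝ => η y a c') c) = etaG a c := by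
    funext y
    have heq : (fun c' : ℝ => η y a c') = fun c' : ℝ => c' * (1 / Real.cosh (c' * (y - a))) :=
      funext fun c' => hη y a c'
    rw [heq]
    exact (hasDerivAt_in_c a c y).deriv
  have hint := integrable_etaG a hc
  have htop : Tendsto (fun z : ℝ => (z - a) / Real.cosh (c * (z - a))) atTop (𝓝 0) := by
    apply tendsto_F a hc
    have : Tendsto (fun z : ℝ => z - a) atTop atTop :=
      tendsto_atTop_add_const_right atTop (-a) tendsto_id
    exact tendsto_abs_atTop_atTop.comp this
  have hbot : Tendsto (fun z : ℝ => (z - a) / Real.cosh (c * (z - a))) atBot (𝓝 0) := by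
    apply tendsto_F a hc
    have : Tendsto (fun z : ℝ => z - a) atBot atBot :=
      tendsto_atBot_add_const_right atBot (-a) tendsto_id
    exact tendsto_abs_atBot_atTop.comp this
  have hIic : ∫ y in Iic x, etaG a c y = (x - a) / Real.cosh (c * (x - a)) - 0 :=
    integral_Iic_of_hasDerivAt_of_tendsto' (fun y _ => hasDerivAt_F a c y)
      hint.integrableOn hbot
  have hIci : ∫ y in Ici x, etaG a c y = 0 - (x - a) / Real.cosh (c * (x - a)) := by
    rw [integral_Ici_eq_integral_Ioi]
    exact integral_Ioi_of_hasDerivAt_of_tendsto' (fun y _ => hasDerivAt_F a c y)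
      hint.integrableOn htop
  rw [invDx, hfun, hIic, hIci, hη]
  have hcosh := (Real.cosh_pos (c * (x - a))).ne'
  field_simp
  ring
end

section
/- Let a, c : [0,T] → ℝ and ā = a − ã, c̄ = c − c̃, and suppose (ā, c̄) satisfies a linear ODE system with coefficient matrix A(t) whose entries satisfy |A₁₁(t)| ≤ Kε, |A₁₂(t)| ≤ K, |A₂₁(t)| ≤ Kε, |A₂₂(t)| ≤ Kε. Define p(t) = (ε·ā(t)² + c̄(t)²)^{1/2}. Then whenever p(t) > 0, |p'(t)| ≤ C(K)·(ε^{1/2}p(t) + ε^{1/2}|R₁(t)| + |R₂(t)|), where (R₁, R₂) is the inhomogeneous term of the system. -/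
lemma p_deriv_bound_aux (K eps s p r1 r2 xa yc : ℝ) (hK : 0 ≤ K) (hp : 0 ≤ p)
    (hs : 0 ≤ s) (hr1 : 0 ≤ r1) (hr2 : 0 ≤ r2) (hxa : 0 ≤ xa) (hyc : 0 ≤ yc)
    (hss : s * s = eps) (hes : eps ≤ s) (hA : eps * xa ≤ s * p) (hy : yc ≤ p) :
    eps * xa * (K * eps * xa + K * yc + r1) + yc * (K * eps * xa + K * eps * yc + r2)
      ≤ (4 * K + 1) * (s * p + s * r1 + r2) * p := by
  have heps : 0 ≤ eps := hss ▸ mul_nonneg hs hs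
  have hpa : 0 ≤ eps * xa := mul_nonneg heps hxa
  have hsp : 0 ≤ s * p := mul_nonneg hs hp
  have b1 : eps * xa * (eps * xa) ≤ s * p * (s * p) := mul_le_mul hA hA hpa hsp
  have b2 : eps * xa * yc ≤ s * p * p := mul_le_mul hA hy hyc hsp
  have b3 : eps * xa * r1 ≤ s * p * r1 := mul_le_mul_of_nonneg_right hA hr1
  have hey : eps * yc ≤ s * p :=
    le_trans (mul_le_mul hes hy hyc hs) (le_of_eq rfl)
  have b4 : eps * yc * yc ≤ s * p * p := mul_le_mul hey hy hyc hsp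
  have b5 : yc * r2 ≤ p * r2 := mul_le_mul_of_nonneg_right hy hr2
  have hsp2 : s * p * (s * p) = eps * (p * p) := by rw [← hss]; ring
  have hεpp : eps * (p * p) ≤ s * (p * p) :=
    mul_le_mul_of_nonneg_right hes (mul_nonneg hp hp)
  nlinarith [mul_le_mul_of_nonneg_left b1 hK, mul_le_mul_of_nonneg_left b2 hK,
    mul_le_mul_of_nonneg_left b4 hK, b3, b5,
    mul_le_mul_of_nonneg_left hεpp hK,
    mul_nonneg hs (mul_nonneg hp hp),
    mul_nonneg (mul_nonneg (mul_nonneg hK hs) hr1) hp,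
    mul_nonneg (mul_nonneg hK hr2) hp]


/-- Derivative bound on `p(t) = (ε ā² + c̄²)^{1/2}` for the linear ODE system
`ā' = A₁₁ā + A₁₂c̄ + R₁`, `c̄' = A₂₁ā + A₂₂c̄ + R₂` with
`|A₁₁|,|A₂₁|,|A₂₂| ≤ Kε`, `|A₁₂| ≤ K`. -/
theorem p_deriv_bound (K : ℝ) (hK : 0 < K) :
    ∃ C : ℝ, 0 < C ∧
      ∀ (T ε : ℝ) (hε : 0 < ε) (hε1 : ε ≤ 1)
        (abar cbar A11 A12 A21 A22 R1 R2 : ℝ → ℝ),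
        (∀ t ∈ Set.Icc 0 T,
          HasDerivAt abar (A11 t * abar t + A12 t * cbar t + R1 t) t) →
        (∀ t ∈ Set.Icc 0 T,
          HasDerivAt cbar (A21 t * abar t + A22 t * cbar t + R2 t) t) →
        (∀ t ∈ Set.Icc 0 T, |A11 t| ≤ K * ε) →
        (∀ t ∈ Set.Icc 0 T, |A12 t| ≤ K) →
        (∀ t ∈ Set.Icc 0 T, |A21 t| ≤ K * ε) →
        (∀ t ∈ Set.Icc 0 T, |A22 t| ≤ K * ε) →
        ∀ t ∈ Set.Icc 0 T,
          Real.sqrt (ε * (abar t) ^ 2 + (cbar t) ^ 2) > 0 →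
          |deriv (fun s => Real.sqrt (ε * (abar s) ^ 2 + (cbar s) ^ 2)) t|
            ≤ C * (Real.sqrt ε * Real.sqrt (ε * (abar t) ^ 2 + (cbar t) ^ 2)
                + Real.sqrt ε * |R1 t| + |R2 t|) := by
  refine ⟨4 * K + 1, by linarith, ?_⟩
  intro T ε hε hε1 abar cbar A11 A12 A21 A22 R1 R2 ha hc h11 h12 h21 h22 t ht hp
  set a := abar t with ha0
  set c := cbar t with hc0
  set s := Real.sqrt ε with hs0
  set p := Real.sqrt (ε * a ^ 2 + c ^ 2) with hp0
  have hqpos : 0 < ε * a ^ 2 + c ^ 2 := Real.sqrt_pos.mp hp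
  have hs_pos : 0 < s := Real.sqrt_pos.mpr hε
  have hss : s * s = ε := Real.mul_self_sqrt hε.le
  have hs1 : s ≤ 1 := Real.sqrt_le_one.mpr hε1
  have hes : ε ≤ s := by nlinarith
  have hpsq : p ^ 2 = ε * a ^ 2 + c ^ 2 := Real.sq_sqrt hqpos.le
  have hx : s * |a| ≤ p := by
    have h1 : s * |a| = Real.sqrt (ε * a ^ 2) := by
      rw [hs0, ← Real.sqrt_sq_eq_abs, ← Real.sqrt_mul hε.le]
    rw [h1, hp0]
    exact Real.sqrt_le_sqrt (by nlinarith [sq_nonneg c])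
  have hy : |c| ≤ p := by
    have h1 : |c| = Real.sqrt (c ^ 2) := (Real.sqrt_sq_eq_abs c).symm
    rw [h1, hp0]
    exact Real.sqrt_le_sqrt (by nlinarith [sq_nonneg a])
  have hA : ε * |a| ≤ s * p := by
    have : s * (s * |a|) ≤ s * p := mul_le_mul_of_nonneg_left hx hs_pos.le
    nlinarith [abs_nonneg a]
  set a' := A11 t * a + A12 t * c + R1 t with ha'
  set c' := A21 t * a + A22 t * c + R2 t with hc'
  have hda := ha t ht
  have hdc := hc t ht
  have h1 : HasDerivAt (fun u => ε * abar u ^ 2 + cbar u ^ 2)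
      (2 * (ε * a * a' + c * c')) t := by
    have h : HasDerivAt (fun u => ε * abar u ^ 2 + cbar u ^ 2) _ t :=
      ((hda.pow 2).const_mul ε).add (hdc.pow 2)
    convert h using 1
    push_cast
    ring
  have h2 := h1.sqrt hqpos.ne'
  rw [h2.deriv]
  have hppos : (0:ℝ) < 2 * p := by positivity
  rw [abs_div, abs_of_pos hppos, div_le_iff₀ hppos]
  have habs : |2 * (ε * a * a' + c * c')| = 2 * |ε * a * a' + c * c'| := by
    rw [abs_mul, abs_of_pos (by norm_num : (0:ℝ) < 2)]
  rw [habs]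
  have hr1 : (0:ℝ) ≤ |R1 t| := abs_nonneg _
  have hr2 : (0:ℝ) ≤ |R2 t| := abs_nonneg _
  have hb11 := h11 t ht
  have hb12 := h12 t ht
  have hb21 := h21 t ht
  have hb22 := h22 t ht
  have hEa : |a'| ≤ K * ε * |a| + K * |c| + |R1 t| := by
    rw [ha']
    calc |A11 t * a + A12 t * c + R1 t|
        ≤ |A11 t * a| + |A12 t * c| + |R1 t| := abs_add_three _ _ _
      _ ≤ K * ε * |a| + K * |c| + |R1 t| := by
          rw [abs_mul, abs_mul]
          gcongr
  have hEc : |c'| ≤ K * ε * |a| + K * ε * |c| + |R2 t| := by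
    rw [hc']
    calc |A21 t * a + A22 t * c + R2 t|
        ≤ |A21 t * a| + |A22 t * c| + |R2 t| := abs_add_three _ _ _
      _ ≤ K * ε * |a| + K * ε * |c| + |R2 t| := by
          rw [abs_mul, abs_mul]
          gcongr
  have key : |ε * a * a' + c * c'|
      ≤ ε * |a| * (K * ε * |a| + K * |c| + |R1 t|)
        + |c| * (K * ε * |a| + K * ε * |c| + |R2 t|) := by
    calc |ε * a * a' + c * c'| ≤ |ε * a * a'| + |c * c'| := abs_add_le _ _
      _ = ε * |a| * |a'| + |c| * |c'| := by
          rw [abs_mul, abs_mul, abs_mul, abs_of_pos hε]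
      _ ≤ ε * |a| * (K * ε * |a| + K * |c| + |R1 t|)
          + |c| * (K * ε * |a| + K * ε * |c| + |R2 t|) := by
          have g1 : ε * |a| * |a'| ≤ ε * |a| * (K * ε * |a| + K * |c| + |R1 t|) :=
            mul_le_mul_of_nonneg_left hEa (by positivity)
          have g2 : |c| * |c'| ≤ |c| * (K * ε * |a| + K * ε * |c| + |R2 t|) :=
            mul_le_mul_of_nonneg_left hEc (abs_nonneg _)
          linarith
  have final : |ε * a * a' + c * c'|
      ≤ (4 * K + 1) * (s * p + s * |R1 t| + |R2 t|) * p :=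
    key.trans (p_deriv_bound_aux K ε s p |R1 t| |R2 t| |a| |c| hK.le hp.le
      hs_pos.le hr1 hr2 (abs_nonneg _) (abs_nonneg _) hss hes hA hy)
  calc 2 * |ε * a * a' + c * c'|
      ≤ 2 * ((4 * K + 1) * (s * p + s * |R1 t| + |R2 t|) * p) := by linarith
    _ = (4 * K + 1) * (s * p + s * |R1 t| + |R2 t|) * (2 * p) := by ring
end
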